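/- Define τ(w) = {i : w⁻¹(i) > w⁻¹(i+1)} for w ∈ S_n, and for a standard Young tableau T define τ(T) = {i : the row of i+1 in T is strictly below the row of i}. Then for every w ∈ S_n, τ(P(w)) = τ(w), where P(w) is the Robinson–Schensted insertion tableau of w. -/

import Mathlib

/-- Robinson–Schensted row insertion of a letter into a tableau (list of rows). -/
def rowInsert : List (List ℕ) → ℕ → List (List ℕ)
  | [], a => [[a]]
  | r :: rs, a =>
    match r.dropWhile (· < a) with
    | [] => (r ++ [a]) :: rs
    | x :: rest => (r.takeWhile (· < a) ++ a :: rest) :: rowInsert rs x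

/-- The Robinson–Schensted insertion tableau `P(w)` of a word `w`. -/
def RS (w : List ℕ) : List (List ℕ) := w.foldl rowInsert []

/-- The word form `[w(1),…,w(n)]` of a permutation, with 1-based letters. -/
def wordOf {n : ℕ} (w : Equiv.Perm (Fin n)) : List ℕ :=
  (List.finRange n).map (fun k => (w k : ℕ) + 1)

/-- The (0-based) index of the row of a tableau containing the entry `a`. -/
def rowOf (T : List (List ℕ)) (a : ℕ) : ℕ := T.findIdx (fun r => r.contains a)

namespace RSAux

abbrev Row := List ℕ
abbrev Tab := List (List ℕ)

/-- `b` sits at row `k`, column `c` of `T`. -/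
def Ent (T : Tab) (k c b : ℕ) : Prop := (T.getD k [])[c]? = some b

def Dom (r s : Row) : Prop := ∀ (c : ℕ) (z : ℕ), s[c]? = some z → ∃ y, r[c]? = some y ∧ y < z

def Std (T : Tab) : Prop := (∀ r ∈ T, List.Pairwise (· < ·) r) ∧ List.Chain' Dom T

lemma ent_nil {k c b} : ¬ Ent ([] : Tab) k c b := by simp [Ent]

lemma ent_cons_succ {r : Row} {rs : Tab} {k c b} : Ent (r :: rs) (k+1) c b ↔ Ent rs k c b :=
  Iff.rfl

lemma ent_unique {T k c b b'} (h : Ent T k c b) (h' : Ent T k c b') : b = b' := by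
  simp [Ent] at h h'; rw [h] at h'; exact Option.some.inj h'

lemma ent_mem {T : Tab} {k c b} (h : Ent T k c b) : b ∈ T.flatten := by
  induction T generalizing k with
  | nil => exact absurd h ent_nil
  | cons r rs ih =>
    cases k with
    | zero => simp [Ent] at h; exact List.mem_flatten.2 ⟨r, by simp, List.mem_of_getElem? h⟩
    | succ k => simpa using Or.inr (ih h)

lemma mem_ent {T : Tab} {b} (h : b ∈ T.flatten) : ∃ k c, Ent T k c b := by
  induction T with
  | nil => simp at h
  | cons r rs ih =>
    rw [List.flatten_cons, List.mem_append] at h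
    rcases h with h | h
    · obtain ⟨c, hc, hcb⟩ := List.getElem_of_mem h
      exact ⟨0, c, by simp [Ent, List.getElem?_eq_some_iff]; exact ⟨hc, hcb⟩⟩
    · obtain ⟨k, c, hk⟩ := ih h
      exact ⟨k+1, c, hk⟩


lemma row_sorted {T : Tab} (hT : Std T) (k : ℕ) : List.Pairwise (· < ·) (T.getD k []) := by
  rcases lt_or_ge k T.length with h | h
  · exact hT.1 _ (by rw [List.getD_eq_getElem _ _ h]; exact List.getElem_mem h)
  · rw [List.getD_eq_default _ _ h]; exact List.Pairwise.nil

lemma sorted_lt {l : Row} (hl : List.Pairwise (· < ·) l) {d c z b : ℕ}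
    (hz : l[d]? = some z) (hb : l[c]? = some b) (hdc : d < c) : z < b := by
  obtain ⟨hd, hz⟩ := List.getElem?_eq_some_iff.1 hz
  obtain ⟨hc, hb⟩ := List.getElem?_eq_some_iff.1 hb
  subst hz hb
  exact hl.rel_get_of_lt (a := ⟨d, hd⟩) (b := ⟨c, hc⟩) hdc

lemma sorted_le {l : Row} (hl : List.Pairwise (· < ·) l) {d c z b : ℕ}
    (hz : l[d]? = some z) (hb : l[c]? = some b) (hdc : d ≤ c) : z ≤ b := by
  rcases lt_or_eq_of_le hdc with h | h
  · exact (sorted_lt hl hz hb h).le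
  · subst h; rw [hz] at hb; exact (Option.some.inj hb).le

lemma exists_left {l : Row} {c b : ℕ} (hb : l[c]? = some b) {d : ℕ} (hdc : d ≤ c) :
    ∃ z, l[d]? = some z := by
  obtain ⟨hc, _⟩ := List.getElem?_eq_some_iff.1 hb
  exact ⟨l[d], List.getElem?_eq_some_iff.2 ⟨lt_of_le_of_lt hdc hc, rfl⟩⟩

/-- Consecutive-rows domination from `Std`. -/
lemma std_dom {T : Tab} (hT : Std T) {k c z : ℕ} (h : Ent T (k+1) c z) :
    ∃ y, Ent T k c y ∧ y < z := by
  have hk1 : k + 1 < T.length := by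
    by_contra hk
    rw [Ent, List.getD_eq_default _ _ (le_of_not_gt hk)] at h; simp at h
  have hk : k < T.length := Nat.lt_of_succ_lt hk1
  have := List.isChain_iff_getElem.1 hT.2 k (by omega)
  rw [Ent, List.getD_eq_getElem _ _ hk1] at h
  obtain ⟨y, hy, hyz⟩ := this c z (by simpa using h)
  exact ⟨y, by rw [Ent, List.getD_eq_getElem _ _ hk]; simpa using hy, hyz⟩

/-- Entries strictly above are strictly smaller (and exist). -/
lemma std_above {T : Tab} (hT : Std T) {k c b : ℕ} (h : Ent T k c b) {j : ℕ} (hj : j ≤ k) :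
    ∃ z, Ent T j c z ∧ (j < k → z < b) := by
  induction k generalizing b with
  | zero => exact ⟨b, by rwa [Nat.le_zero.1 hj], by omega⟩
  | succ k ih =>
    rcases Nat.lt_or_ge j (k+1) with hjk | hjk
    · obtain ⟨y, hy, hyb⟩ := std_dom hT h
      obtain ⟨z, hz, hzy⟩ := ih hy (by omega)
      refine ⟨z, hz, fun _ => ?_⟩
      rcases Nat.lt_or_ge j k with h' | h'
      · exact lt_trans (hzy h') hyb
      · have : j = k := le_antisymm (by omega) h'
        subst this
        have := ent_unique hz hy; omega
    · have : j = k + 1 := le_antisymm hj hjk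
      subst this; exact ⟨b, h, by omega⟩


lemma rowInsert_nil (a : ℕ) : rowInsert [] a = [[a]] := rfl

lemma rowInsert_app {r : Row} {rs : Tab} {a : ℕ} (h : r.dropWhile (· < a) = []) :
    rowInsert (r :: rs) a = (r ++ [a]) :: rs := by
  simp [rowInsert, h]

lemma rowInsert_bump {r : Row} {rs : Tab} {a x : ℕ} {rest : Row}
    (h : r.dropWhile (· < a) = x :: rest) :
    rowInsert (r :: rs) a = (r.takeWhile (· < a) ++ a :: rest) :: rowInsert rs x := by
  simp [rowInsert, h]

lemma dropWhile_head_not {p : ℕ → Bool} {l : Row} {x : ℕ} {rest : Row}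
    (h : l.dropWhile p = x :: rest) : p x = false := by
  have := List.head?_dropWhile_not p l
  rw [h] at this; simpa using this

lemma getElem?_mid_lt {u v : Row} {b : ℕ} {d : ℕ} (h : d < u.length) :
    (u ++ b :: v)[d]? = u[d]? := by
  rw [List.getElem?_append]; simp [h]

lemma getElem?_mid_eq {u v : Row} {b : ℕ} : (u ++ b :: v)[u.length]? = some b := by
  rw [List.getElem?_append_right le_rfl]; simp

lemma getElem?_mid_gt {u v : Row} {b b' : ℕ} {d : ℕ} (h : u.length < d) :
    (u ++ b :: v)[d]? = (u ++ b' :: v)[d]? := by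
  rw [List.getElem?_append_right h.le, List.getElem?_append_right h.le]
  have : d - u.length = (d - u.length - 1) + 1 := by omega
  rw [this]; simp

lemma takeWhile_lt {r : Row} {a z d : ℕ} (h : (r.takeWhile (· < a))[d]? = some z) : z < a := by
  have := List.mem_takeWhile_imp (List.mem_of_getElem? h)
  simpa using this

/-- Where the freshly inserted letter lands: row 0, with facts about the old row 0. -/
lemma land {T : Tab} {a : ℕ} (ha : a ∉ T.flatten) :
    ∃ c₀, Ent (rowInsert T a) 0 c₀ a ∧
      (∀ d, d < c₀ → ∃ z, (T.getD 0 [])[d]? = some z ∧ z < a) ∧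
      (∀ z, (T.getD 0 [])[c₀]? = some z → a < z) := by
  cases T with
  | nil => exact ⟨0, by simp [Ent, rowInsert], by omega, by simp⟩
  | cons r rs =>
    rcases hd : r.dropWhile (· < a) with _ | ⟨x, rest⟩
    · refine ⟨r.length, ?_, ?_, ?_⟩
      · rw [rowInsert_app hd]; simpa [Ent] using List.getElem?_concat_length (l := r) (a := a)
      · intro d hdl
        refine ⟨r[d], by simp, ?_⟩
        have := List.dropWhile_eq_nil_iff.1 hd _ (r.getElem_mem hdl)
        simpa using this
      · intro z hz; simp at hz
    · set t := r.takeWhile (· < a) with ht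
      have hr : t ++ x :: rest = r := by
        rw [ht, ← hd]; exact List.takeWhile_append_dropWhile
      refine ⟨t.length, ?_, ?_, ?_⟩
      · rw [rowInsert_bump hd]; simpa [Ent, ← ht] using (getElem?_mid_eq (u := t) (v := rest) (b := a))
      · intro d hdl
        have h1 : r[d]? = t[d]? := by
          conv_lhs => rw [← hr]
          exact getElem?_mid_lt hdl
        refine ⟨t[d], ?_, ?_⟩
        · simp only [List.getD_cons_zero]; rw [h1]; exact List.getElem?_eq_getElem hdl
        · exact takeWhile_lt (z := t[d]) (List.getElem?_eq_getElem hdl)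
      · intro z hz
        have hx : r[t.length]? = some x := by
          conv_lhs => rw [← hr]
          exact getElem?_mid_eq
        simp only [List.getD_cons_zero] at hz
        rw [hz] at hx
        have hzx : z = x := by simpa using hx
        subst hzx
        have h1 : ¬ (z < a) := by simpa using dropWhile_head_not hd
        have h2 : z ≠ a := by
          rintro rfl
          exact ha (List.mem_flatten.2 ⟨r, by simp, by rw [← hr]; simp⟩)
        omega


lemma flatten_rowInsert_perm (T : Tab) (a : ℕ) :
    (rowInsert T a).flatten.Perm (a :: T.flatten) := by
  induction T generalizing a with
  | nil => simp [rowInsert]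
  | cons r rs ih =>
    rcases hd : r.dropWhile (· < a) with _ | ⟨y, rest⟩
    · rw [rowInsert_app hd]
      rw [List.perm_iff_count]; intro b
      simp [List.count_append, List.count_cons]
      omega
    · rw [rowInsert_bump hd]
      set t := r.takeWhile (· < a) with ht
      have hr : t ++ y :: rest = r := by
        rw [ht, ← hd]; exact List.takeWhile_append_dropWhile
      have h2 := ih y
      simp only [List.flatten_cons]
      refine ((List.Perm.append_left _ h2).trans ?_)
      rw [← hr]
      rw [List.perm_iff_count]; intro b
      simp [List.count_append, List.count_cons, beq_iff_eq]
      omega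

/-- The evolution of the position of an existing letter `b` under insertion of `a`. -/
theorem evolve {T : Tab} {a : ℕ} (ha : a ∉ T.flatten) (hnd : T.flatten.Nodup) {k c b : ℕ}
    (hb : Ent T k c b) :
    Ent (rowInsert T a) k c b ∨
    ∃ c2 v, a ≤ v ∧ v < b ∧ Ent (rowInsert T a) k c v ∧ Ent (rowInsert T a) (k+1) c2 b ∧
      (∀ d z, d < c → Ent T k d z → z < v) ∧
      (∀ d, d < c2 → ∃ z, Ent T (k+1) d z ∧ z < b) ∧
      (∀ z, Ent T (k+1) c2 z → b < z) := by
  induction T generalizing a k with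
  | nil => exact absurd hb ent_nil
  | cons r rs ih =>
    have hndr : (r ++ rs.flatten).Nodup := by simpa using hnd
    rcases hd : r.dropWhile (· < a) with _ | ⟨y, rest⟩
    · left
      rw [rowInsert_app hd]
      cases k with
      | zero =>
        have hb' : r[c]? = some b := hb
        have hc : c < r.length := (List.getElem?_eq_some_iff.1 hb').1
        show (r ++ [a])[c]? = some b
        rw [List.getElem?_append]; simp [hc, hb']; exact (List.getElem?_eq_some_iff.1 hb').2
      | succ k => exact hb
    · set t := r.takeWhile (· < a) with ht
      have hr : t ++ y :: rest = r := by
        rw [ht, ← hd]; exact List.takeWhile_append_dropWhile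
      have hy_mem_r : y ∈ r := by rw [← hr]; simp
      have hay : a < y := by
        have h1 : ¬ (y < a) := by simpa using dropWhile_head_not hd
        have h2 : y ≠ a := by
          rintro rfl
          exact ha (List.mem_flatten.2 ⟨r, by simp, hy_mem_r⟩)
        omega
      have hy_rs : y ∉ rs.flatten := by
        have := (List.nodup_append.1 hndr).2.2
        exact fun hc => this y hy_mem_r y hc rfl
      have hnd_rs : rs.flatten.Nodup := (List.nodup_append.1 hndr).2.1
      rw [rowInsert_bump hd, ← ht]
      cases k with
      | zero =>
        have hb' : r[c]? = some b := hb
        rcases lt_trichotomy c t.length with hc | hc | hc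
        · left
          show (t ++ a :: rest)[c]? = some b
          rw [getElem?_mid_lt hc]
          rw [← hr] at hb'
          rw [← getElem?_mid_lt (v := rest) (b := y) hc]
          exact hb'
        · -- b = y is bumped
          subst hc
          have hby : b = y := by
            rw [← hr] at hb'
            rw [getElem?_mid_eq] at hb'
            exact (Option.some.inj hb').symm
          subst hby
          obtain ⟨c₀, hl1, hl2, hl3⟩ := land (T := rs) hy_rs
          right
          refine ⟨c₀, a, le_rfl, hay, ?_, ?_, ?_, ?_, ?_⟩
          · show (t ++ a :: rest)[t.length]? = some a
            exact getElem?_mid_eq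
          · exact hl1
          · intro d z hdc hz
            have hz' : r[d]? = some z := hz
            rw [← hr, getElem?_mid_lt hdc] at hz'
            exact takeWhile_lt hz'
          · exact hl2
          · exact hl3
        · left
          show (t ++ a :: rest)[c]? = some b
          rw [getElem?_mid_gt (b' := y) hc]
          rw [← hr] at hb'
          exact hb'
      | succ k =>
        rcases ih (a := y) hy_rs hnd_rs hb with h | ⟨c2, v, h1, h2, h3, h4, h5, h6, h7⟩
        · exact Or.inl h
        · exact Or.inr ⟨c2, v, le_of_lt (lt_of_lt_of_le hay h1), h2, h3, h4, h5, h6, h7⟩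


lemma sorted_append' {l l' : Row} : (l ++ l').Pairwise (· < ·) ↔
    l.Pairwise (· < ·) ∧ l'.Pairwise (· < ·) ∧ ∀ x ∈ l, ∀ y ∈ l', x < y := by
  simp [List.Pairwise, List.pairwise_append]

theorem std_rowInsert {T : Tab} (hT : Std T) {a : ℕ} (ha : a ∉ T.flatten)
    (hnd : T.flatten.Nodup) : Std (rowInsert T a) := by
  induction T generalizing a with
  | nil =>
    constructor
    · intro r hr; simp [rowInsert] at hr; subst hr; simp
    · simp [rowInsert]; exact List.isChain_singleton _
  | cons r rs ih =>
    have hsr : List.Pairwise (· < ·) r := hT.1 r (by simp)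
    have hrs_sorted : ∀ u ∈ rs, List.Pairwise (· < ·) u := fun u hu => hT.1 u (by simp [hu])
    have hchain := hT.2
    have hndr : (r ++ rs.flatten).Nodup := by simpa using hnd
    have hnd_rs : rs.flatten.Nodup := (List.nodup_append.1 hndr).2.1
    rcases hd : r.dropWhile (· < a) with _ | ⟨y, rest⟩
    · -- append case
      rw [rowInsert_app hd]
      have hall : ∀ u ∈ r, u < a := by
        intro u hu; have := List.dropWhile_eq_nil_iff.1 hd _ hu; simpa using this
      constructor
      · intro u hu
        rcases List.mem_cons.1 hu with h | h
        · subst h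
          rw [sorted_append']
          exact ⟨hsr, by simp, fun p hp q hq => by simp at hq; subst hq; exact hall p hp⟩
        · exact hrs_sorted u h
      · rcases rs with _ | ⟨s, rs'⟩
        · exact List.isChain_singleton _
        · have hds : Dom r s := (List.isChain_cons_cons.1 hchain).1
          refine List.isChain_cons_cons.2 ⟨?_, (List.isChain_cons_cons.1 hchain).2⟩
          intro c z hz
          obtain ⟨w, hw, hwz⟩ := hds c z hz
          refine ⟨w, ?_, hwz⟩
          have hc : c < r.length := (List.getElem?_eq_some_iff.1 hw).1
          rw [List.getElem?_append]; simp [hc, hw]; exact (List.getElem?_eq_some_iff.1 hw).2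
    · -- bump case
      set t := r.takeWhile (· < a) with ht
      have hr : t ++ y :: rest = r := by
        rw [ht, ← hd]; exact List.takeWhile_append_dropWhile
      have hy_mem_r : y ∈ r := by rw [← hr]; simp
      have hay : a < y := by
        have h1 : ¬ (y < a) := by simpa using dropWhile_head_not hd
        have h2 : y ≠ a := by
          rintro rfl; exact ha (List.mem_flatten.2 ⟨r, by simp, hy_mem_r⟩)
        omega
      have hy_rs : y ∉ rs.flatten := fun hc => (List.nodup_append.1 hndr).2.2 y hy_mem_r y hc rfl
      have ht_lt : ∀ u ∈ t, u < a := by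
        intro u hu; have := List.mem_takeWhile_imp (ht ▸ hu); simpa using this
      have hsr' : List.Pairwise (· < ·) (t ++ y :: rest) := by rw [hr]; exact hsr
      rw [sorted_append'] at hsr'
      obtain ⟨hst, hsyr, hcross⟩ := hsr'
      have hyrest : ∀ v ∈ rest, y < v := (List.pairwise_cons.1 hsyr).1
      have hsrest : List.Pairwise (· < ·) rest := (List.pairwise_cons.1 hsyr).2
      have hF4 : r[t.length]? = some y := by rw [← hr]; exact getElem?_mid_eq
      -- sortedness of the new head
      have hnew_sorted : List.Pairwise (· < ·) (t ++ a :: rest) := by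
        rw [sorted_append']
        refine ⟨hst, List.pairwise_cons.2 ⟨fun v hv => lt_trans hay (hyrest v hv), hsrest⟩, ?_⟩
        intro u hu v hv
        rcases List.mem_cons.1 hv with h | h
        · subst h; exact ht_lt u hu
        · exact lt_trans (ht_lt u hu) (lt_trans hay (hyrest v h))
      have hstd_rs : Std rs := by
        constructor
        · exact hrs_sorted
        · rcases rs with _ | ⟨s, rs'⟩
          · exact List.isChain_nil
          · exact (List.isChain_cons_cons.1 hchain).2
      have hins : Std (rowInsert rs y) := ih hstd_rs hy_rs hnd_rs
      rw [rowInsert_bump hd, ← ht]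
      constructor
      · intro u hu
        rcases List.mem_cons.1 hu with h | h
        · subst h; exact hnew_sorted
        · exact hins.1 u h
      · -- Chain': Dom (t ++ a :: rest) (head of rowInsert rs y), then chain of the rest
        rcases rs with _ | ⟨s, rs'⟩
        · rw [rowInsert_nil]
          refine List.isChain_cons_cons.2 ⟨?_, by simp⟩
          intro c z hz
          rcases List.getElem?_eq_some_iff.1 hz with ⟨hc, hzz⟩
          simp at hc
          subst hc
          simp at hzz
          subst hzz
          rcases t with _ | ⟨u, t'⟩
          · exact ⟨a, by simp, hay⟩
          · exact ⟨u, by simp, lt_trans (ht_lt u (by simp)) hay⟩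
        · have hds : Dom r s := (List.isChain_cons_cons.1 hchain).1
          have hnewr : ∀ c, c ≠ t.length → (t ++ a :: rest)[c]? = r[c]? := by
            intro c hc
            rcases lt_or_gt_of_ne hc with h | h
            · rw [getElem?_mid_lt h]
              conv_rhs => rw [← hr]
              rw [getElem?_mid_lt h]
            · rw [getElem?_mid_gt (b' := y) h, hr]
          have htval : ∀ c, c < t.length → ∃ u, (t ++ a :: rest)[c]? = some u ∧ u < a := by
            intro c h
            exact ⟨t[c], by rw [getElem?_mid_lt h]; exact List.getElem?_eq_getElem h,
              ht_lt _ (List.getElem_mem h)⟩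
          have hF2 : (t ++ a :: rest)[t.length]? = some a := getElem?_mid_eq
          rcases hd2 : s.dropWhile (· < y) with _ | ⟨w0, rest2⟩
          · -- y is appended to s
            have hins' := hins
            rw [rowInsert_app hd2] at hins' ⊢
            have alls : ∀ u ∈ s, u < y := by
              intro u hu; have := List.dropWhile_eq_nil_iff.1 hd2 _ hu; simpa using this
            refine List.isChain_cons_cons.2 ⟨?_, hins'.2⟩
            intro c z hz
            rcases lt_trichotomy c s.length with hc | hc | hc
            · have hz' : s[c]? = some z := by
                rw [List.getElem?_append] at hz; simpa [hc] using hz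
              obtain ⟨y2, hy2, hlt⟩ := hds c z hz'
              rcases eq_or_ne c t.length with hct | hct
              · subst hct
                rw [hF4] at hy2
                have : y2 = y := by simpa using hy2.symm
                subst this
                exact absurd hlt (by have := alls z (List.mem_of_getElem? hz'); omega)
              · exact ⟨y2, by rw [hnewr c hct]; exact hy2, hlt⟩
            · subst hc
              have hz' : z = y := by
                rw [List.getElem?_append_right le_rfl] at hz; simpa using hz.symm
              have hsl : s.length ≤ t.length := by
                by_contra hcon
                push_neg at hcon
                have hu : s[t.length]? = some (s[t.length]'(by omega)) :=
                  List.getElem?_eq_getElem (by omega)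
                obtain ⟨y2, hy2, hlt⟩ := hds t.length _ hu
                rw [hF4] at hy2
                have : y2 = y := by simpa using hy2.symm
                subst this
                have := alls _ (List.mem_of_getElem? hu)
                omega
              rcases lt_or_eq_of_le hsl with h | h
              · obtain ⟨u, hu, hua⟩ := htval s.length h
                exact ⟨u, hu, by omega⟩
              · rw [h]; exact ⟨a, hF2, by omega⟩
            · exfalso
              have hlen : (s ++ [y]).length ≤ c := by simp; omega
              rw [List.getElem?_eq_none hlen] at hz
              exact absurd hz (by simp)
          · -- y bumps w0 in s
            have hins' := hins
            rw [rowInsert_bump hd2] at hins' ⊢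
            set t2 := s.takeWhile (· < y) with ht2
            have hs : t2 ++ w0 :: rest2 = s := by
              rw [ht2, ← hd2]; exact List.takeWhile_append_dropWhile
            have ht2_lt : ∀ u ∈ t2, u < y := by
              intro u hu; have := List.mem_takeWhile_imp (ht2 ▸ hu); simpa using this
            have hc2 : t2.length ≤ t.length := by
              by_contra hcon
              push_neg at hcon
              have hu : s[t.length]? = some t2[t.length] := by
                conv_lhs => rw [← hs]
                rw [getElem?_mid_lt hcon]
                exact List.getElem?_eq_getElem hcon
              obtain ⟨y2, hy2, hlt⟩ := hds t.length _ hu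
              rw [hF4] at hy2
              have : y2 = y := by simpa using hy2.symm
              subst this
              have := ht2_lt _ (List.getElem_mem hcon)
              omega
            refine List.isChain_cons_cons.2 ⟨?_, hins'.2⟩
            intro c z hz
            rcases lt_trichotomy c t2.length with hc | hc | hc
            · have hz' : s[c]? = some z := by
                conv_lhs => rw [← hs]
                rw [getElem?_mid_lt hc]
                rw [getElem?_mid_lt hc] at hz
                exact hz
              obtain ⟨y2, hy2, hlt⟩ := hds c z hz'
              exact ⟨y2, by rw [hnewr c (by omega)]; exact hy2, hlt⟩
            · subst hc
              have hz' : z = y := by rw [getElem?_mid_eq] at hz; simpa using hz.symm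
              rcases lt_or_eq_of_le hc2 with h | h
              · obtain ⟨u, hu, hua⟩ := htval t2.length h
                exact ⟨u, hu, by omega⟩
              · rw [h]; exact ⟨a, hF2, by omega⟩
            · have hz' : s[c]? = some z := by
                conv_lhs => rw [← hs]
                rw [getElem?_mid_gt (b' := y) hc] at hz ⊢
                exact hz
              obtain ⟨y2, hy2, hlt⟩ := hds c z hz'
              rcases eq_or_ne c t.length with hct | hct
              · subst hct
                rw [hF4] at hy2
                have : y2 = y := by simpa using hy2.symm
                subst this
                exact ⟨a, hF2, lt_trans hay hlt⟩
              · exact ⟨y2, by rw [hnewr c hct]; exact hy2, hlt⟩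


lemma nodup_rowInsert {T : Tab} {a : ℕ} (ha : a ∉ T.flatten) (hnd : T.flatten.Nodup) :
    (rowInsert T a).flatten.Nodup :=
  (flatten_rowInsert_perm T a).nodup_iff.2 (List.nodup_cons.2 ⟨ha, hnd⟩)

lemma no_touch {T : Tab} {a : ℕ} (ha : a ∉ T.flatten) (hnd : T.flatten.Nodup) {k c b : ℕ}
    (hb : Ent T k c b) (hba : b < a) : Ent (rowInsert T a) k c b := by
  rcases evolve ha hnd hb with h | ⟨c2, v, h1, h2, _⟩
  · exact h
  · omega

lemma rowOf_ent {T : Tab} (hnd : T.flatten.Nodup) {k c b : ℕ} (h : Ent T k c b) :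
    rowOf T b = k := by
  induction T generalizing k with
  | nil => exact absurd h ent_nil
  | cons r rs ih =>
    have hndr : (r ++ rs.flatten).Nodup := by simpa using hnd
    cases k with
    | zero =>
      have hb : b ∈ r := List.mem_of_getElem? h
      simp [rowOf, List.findIdx_cons, hb]
    | succ k =>
      have hb : b ∈ rs.flatten := ent_mem (T := rs) h
      have hbr : b ∉ r := fun hc => (List.nodup_append.1 hndr).2.2 b hc b hb rfl
      have : r.contains b = false := by
        simpa using hbr
      have h2 := ih (List.nodup_append.1 hndr).2.1 h
      unfold rowOf at h2 ⊢
      simp only [List.findIdx_cons, this, cond_false]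
      omega

def Inv1 (i : ℕ) (T : Tab) : Prop :=
  ∃ k c k' c', k' ≤ k ∧ c < c' ∧ Ent T k c i ∧ Ent T k' c' (i+1)

def Inv2 (i : ℕ) (T : Tab) : Prop :=
  ∃ k1 c1 k2 c2, k1 < k2 ∧ Ent T k1 c1 i ∧ Ent T k2 c2 (i+1)

lemma inv1_step {T : Tab} {x i : ℕ} (hT : Std T) (hx : x ∉ T.flatten)
    (hnd : T.flatten.Nodup) (h : Inv1 i T) : Inv1 i (rowInsert T x) := by
  obtain ⟨k, c, k', c', hkk, hcc, e1, e2⟩ := h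
  rcases evolve hx hnd e1 with f1 | ⟨ci, v, hv1, hv2, hv3, hv4, hv5, hv6, hv7⟩ <;>
    rcases evolve hx hnd e2 with f2 | ⟨c1, w, hw1, hw2, hw3, hw4, hw5, hw6, hw7⟩
  · exact ⟨k, c, k', c', hkk, hcc, f1, f2⟩
  · -- i fixed, i+1 bumped
    have hk'k : k' < k := by
      rcases lt_or_eq_of_le hkk with h | h
      · exact h
      · exfalso
        subst h
        have := hw5 c i hcc e1
        omega
    have hc1c : c < c1 := by
      by_contra hcon
      push_neg at hcon
      obtain ⟨z, hz, himp⟩ := std_above hT e1 (j := k'+1) (by omega)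
      have hzi : z ≤ i := by
        rcases lt_or_eq_of_le (by omega : k' + 1 ≤ k) with h | h
        · exact (himp h).le
        · subst h; exact (ent_unique hz e1).le
      obtain ⟨z2, hz2⟩ := exists_left hz hcon
      have hz2z : z2 ≤ z := sorted_le (row_sorted hT (k'+1)) hz2 hz hcon
      have := hw7 z2 hz2
      omega
    exact ⟨k, c, k'+1, c1, by omega, hc1c, f1, hw4⟩
  · -- i bumped, i+1 fixed
    have hcic : ci ≤ c := by
      by_contra hcon
      push_neg at hcon
      obtain ⟨z, hz, hzi⟩ := hv6 c hcon
      obtain ⟨y, hy, hyz⟩ := std_dom hT hz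
      have := ent_unique hy e1
      omega
    exact ⟨k+1, ci, k', c', by omega, by omega, hv4, f2⟩
  · -- both bumped
    have hk'k : k' < k := by
      rcases lt_or_eq_of_le hkk with h | h
      · exact h
      · exfalso
        subst h
        have := hw5 c i hcc e1
        omega
    have hcic : ci ≤ c := by
      by_contra hcon
      push_neg at hcon
      obtain ⟨z, hz, hzi⟩ := hv6 c hcon
      obtain ⟨y, hy, hyz⟩ := std_dom hT hz
      have := ent_unique hy e1
      omega
    have hc1c : c < c1 := by
      by_contra hcon
      push_neg at hcon
      obtain ⟨z, hz, himp⟩ := std_above hT e1 (j := k'+1) (by omega)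
      have hzi : z ≤ i := by
        rcases lt_or_eq_of_le (by omega : k' + 1 ≤ k) with h | h
        · exact (himp h).le
        · subst h; exact (ent_unique hz e1).le
      obtain ⟨z2, hz2⟩ := exists_left hz hcon
      have hz2z : z2 ≤ z := sorted_le (row_sorted hT (k'+1)) hz2 hz hcon
      have := hw7 z2 hz2
      omega
    exact ⟨k+1, ci, k'+1, c1, by omega, by omega, hv4, hw4⟩

lemma inv2_step {T : Tab} {x i : ℕ} (hT : Std T) (hx : x ∉ T.flatten)
    (hnd : T.flatten.Nodup) (h : Inv2 i T) : Inv2 i (rowInsert T x) := by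
  obtain ⟨k1, c1, k2, c2, hkk, e1, e2⟩ := h
  rcases evolve hx hnd e1 with f1 | ⟨ci, v, hv1, hv2, hv3, hv4, hv5, hv6, hv7⟩ <;>
    rcases evolve hx hnd e2 with f2 | ⟨d1, w, hw1, hw2, hw3, hw4, hw5, hw6, hw7⟩
  · exact ⟨k1, c1, k2, c2, hkk, f1, f2⟩
  · exact ⟨k1, c1, k2+1, d1, by omega, f1, hw4⟩
  · -- i bumped, i+1 fixed
    rcases lt_or_eq_of_le (by omega : k1 + 1 ≤ k2) with hlt | heq
    · exact ⟨k1+1, ci, k2, c2, hlt, hv4, f2⟩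
    · exfalso
      rw [heq] at hv4 hv6 hv7
      rcases lt_trichotomy ci c2 with hc | hc | hc
      · obtain ⟨z2, hz2⟩ := exists_left e2 hc.le
        have := sorted_lt (row_sorted hT k2) hz2 e2 hc
        have := hv7 z2 hz2
        omega
      · subst hc
        have := ent_unique hv4 f2
        omega
      · obtain ⟨z, hz, hzi⟩ := hv6 c2 hc
        have := ent_unique hz e2
        omega
  · exact ⟨k1+1, ci, k2+1, d1, by omega, hv4, hw4⟩

lemma act1 {T : Tab} {i : ℕ} (hT : Std T) (hnd : T.flatten.Nodup)
    (h1 : (i+1) ∉ T.flatten) {k c : ℕ} (hi : Ent T k c i) : Inv1 i (rowInsert T (i+1)) := by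
  obtain ⟨c0, hl1, hl2, hl3⟩ := land h1
  have hinew : Ent (rowInsert T (i+1)) k c i := no_touch h1 hnd hi (by omega)
  have hcc : c < c0 := by
    by_contra hcon
    push_neg at hcon
    obtain ⟨z, hz, himp⟩ := std_above hT hi (j := 0) (Nat.zero_le _)
    have hzi : z ≤ i := by
      rcases Nat.eq_zero_or_pos k with h | h
      · subst h; exact (ent_unique hz hi).le
      · exact (himp h).le
    obtain ⟨z2, hz2⟩ := exists_left hz hcon
    have hz2z : z2 ≤ z := sorted_le (row_sorted hT 0) hz2 hz hcon
    have := hl3 z2 hz2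
    omega
  exact ⟨k, c, 0, c0, Nat.zero_le _, hcc, hinew, hl1⟩

lemma act2 {T : Tab} {i : ℕ} (hT : Std T) (hnd : T.flatten.Nodup)
    (h1 : i ∉ T.flatten) {k c : ℕ} (hi1 : Ent T k c (i+1)) : Inv2 i (rowInsert T i) := by
  obtain ⟨c0, hl1, hl2, hl3⟩ := land h1
  rcases evolve h1 hnd hi1 with f | ⟨d1, w, hw1, hw2, hw3, hw4, hw5, hw6, hw7⟩
  · refine ⟨0, c0, k, c, ?_, hl1, f⟩
    rcases Nat.eq_zero_or_pos k with hk | hk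
    · exfalso
      subst hk
      rcases lt_trichotomy c0 c with hc | hc | hc
      · obtain ⟨z2, hz2⟩ := exists_left hi1 hc.le
        have := sorted_lt (row_sorted hT 0) hz2 hi1 hc
        have := hl3 z2 hz2
        omega
      · subst hc
        have := ent_unique hl1 f
        omega
      · obtain ⟨z, hz, hzi⟩ := hl2 c hc
        have := ent_unique (show Ent T 0 c z from hz) hi1
        omega
    · exact hk
  · exact ⟨0, c0, k+1, d1, by omega, hl1, hw4⟩

lemma fold_std : ∀ (l : List ℕ) (T : Tab), Std T → (T.flatten ++ l).Nodup →
    Std (l.foldl rowInsert T) ∧ (l.foldl rowInsert T).flatten.Perm (T.flatten ++ l) := by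
  intro l
  induction l with
  | nil => intro T hT hnd; exact ⟨hT, by simp⟩
  | cons a l ih =>
    intro T hT hnd
    obtain ⟨n1, n2, disj⟩ := List.nodup_append.1 hnd
    have ha : a ∉ T.flatten := fun hc => disj a hc a (by simp) rfl
    have hperm : (rowInsert T a).flatten ++ l |>.Perm (T.flatten ++ a :: l) := by
      refine ((flatten_rowInsert_perm T a).append_right l).trans ?_
      simpa using (List.perm_middle (a := a) (l₁ := T.flatten) (l₂ := l)).symm
    have hnd' : ((rowInsert T a).flatten ++ l).Nodup := hperm.nodup_iff.2 hnd
    have := ih (rowInsert T a) (std_rowInsert hT ha n1) hnd'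
    refine ⟨this.1, ?_⟩
    simpa using this.2.trans hperm

lemma fold_inv1 {i : ℕ} : ∀ (l : List ℕ) (T : Tab), Std T → (T.flatten ++ l).Nodup →
    Inv1 i T → Inv1 i (l.foldl rowInsert T) := by
  intro l
  induction l with
  | nil => intro T _ _ h; exact h
  | cons a l ih =>
    intro T hT hnd h
    obtain ⟨n1, n2, disj⟩ := List.nodup_append.1 hnd
    have ha : a ∉ T.flatten := fun hc => disj a hc a (by simp) rfl
    have hperm : (rowInsert T a).flatten ++ l |>.Perm (T.flatten ++ a :: l) := by
      refine ((flatten_rowInsert_perm T a).append_right l).trans ?_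
      simpa using (List.perm_middle (a := a) (l₁ := T.flatten) (l₂ := l)).symm
    exact ih (rowInsert T a) (std_rowInsert hT ha n1) (hperm.nodup_iff.2 hnd)
      (inv1_step hT ha n1 h)

lemma fold_inv2 {i : ℕ} : ∀ (l : List ℕ) (T : Tab), Std T → (T.flatten ++ l).Nodup →
    Inv2 i T → Inv2 i (l.foldl rowInsert T) := by
  intro l
  induction l with
  | nil => intro T _ _ h; exact h
  | cons a l ih =>
    intro T hT hnd h
    obtain ⟨n1, n2, disj⟩ := List.nodup_append.1 hnd
    have ha : a ∉ T.flatten := fun hc => disj a hc a (by simp) rfl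
    have hperm : (rowInsert T a).flatten ++ l |>.Perm (T.flatten ++ a :: l) := by
      refine ((flatten_rowInsert_perm T a).append_right l).trans ?_
      simpa using (List.perm_middle (a := a) (l₁ := T.flatten) (l₂ := l)).symm
    exact ih (rowInsert T a) (std_rowInsert hT ha n1) (hperm.nodup_iff.2 hnd)
      (inv2_step hT ha n1 h)


lemma indexOf_lt_of_mem_take {l : List ℕ} {b v : ℕ} (h : b ∈ l.take v) :
    List.idxOf b l < v := by
  induction l generalizing v with
  | nil => simp at h
  | cons a l ih =>
    cases v with
    | zero => simp at h
    | succ v =>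
      rw [List.take_succ_cons] at h
      rcases List.mem_cons.1 h with h | h
      · subst h; simp
      · rcases eq_or_ne a b with h2 | h2
        · subst h2; simp
        · rw [List.idxOf_cons_ne _ (by simpa using h2)]
          exact Nat.succ_lt_succ (ih h)

lemma nodup_wordOf {n : ℕ} (w : Equiv.Perm (Fin n)) : (wordOf w).Nodup := by
  refine List.Nodup.map ?_ (List.nodup_finRange n)
  intro a b h
  simp only at h
  exact w.injective (Fin.val_injective (by omega))

lemma mem_wordOf {n : ℕ} (w : Equiv.Perm (Fin n)) {b : ℕ} (h1 : 1 ≤ b) (h2 : b ≤ n) :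
    b ∈ wordOf w := by
  have hb : b - 1 < n := by omega
  refine List.mem_map.2 ⟨w⁻¹ ⟨b - 1, hb⟩, List.mem_finRange _, ?_⟩
  simp only [Equiv.Perm.inv_def, Equiv.apply_symm_apply]
  omega

/-- Splitting setup for the two symmetric cases. -/
lemma main_case {A : List ℕ} (hA : A.Nodup) {x y : ℕ} (hxA : x ∈ A) (hyA : y ∈ A)
    (hlt : List.idxOf x A < List.idxOf y A) :
    ∃ (T : Tab) (k c : ℕ), Std T ∧ T.flatten.Nodup ∧ y ∉ T.flatten ∧ Ent T k c x ∧
      ((rowInsert T y).flatten ++ A.drop (List.idxOf y A + 1)).Nodup ∧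
      Std (rowInsert T y) ∧
      RS A = (A.drop (List.idxOf y A + 1)).foldl rowInsert (rowInsert T y) := by
  set v := List.idxOf y A with hv
  have hvlen : v < A.length := List.idxOf_lt_length_iff.2 hyA
  have hAv : A[v] = y := List.getElem_idxOf hvlen
  have hsplit : A = A.take v ++ y :: A.drop (v+1) := by
    conv_lhs => rw [← List.take_append_drop v A]
    rw [List.drop_eq_getElem_cons hvlen, hAv]
  have htake_nd : (A.take v).Nodup := (List.take_sublist _ _).nodup hA
  obtain ⟨hT0, hT0perm⟩ := fold_std (A.take v) [] ⟨by simp, List.isChain_nil⟩ (by simpa using htake_nd)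
  set T0 := (A.take v).foldl rowInsert [] with hT0def
  have hT0flat : T0.flatten.Perm (A.take v) := by simpa using hT0perm
  have hT0nd : T0.flatten.Nodup := hT0flat.nodup_iff.2 htake_nd
  have hyT0 : y ∉ T0.flatten := by
    intro hc
    have : y ∈ A.take v := hT0flat.mem_iff.1 hc
    have := indexOf_lt_of_mem_take this
    omega
  have hxT0 : x ∈ T0.flatten := by
    refine hT0flat.mem_iff.2 ?_
    have hu : List.idxOf x A < A.length := List.idxOf_lt_length_iff.2 hxA
    have : (A.take v)[List.idxOf x A]'(by simp; omega) = x := by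
      rw [List.getElem_take]; exact List.getElem_idxOf hu
    rw [← this]
    exact List.getElem_mem _
  obtain ⟨k, c, hEnt⟩ := mem_ent hxT0
  have hnd2 : ((rowInsert T0 y).flatten ++ A.drop (v + 1)).Nodup := by
    have hperm : ((rowInsert T0 y).flatten ++ A.drop (v+1)).Perm
        ((A.take v ++ y :: A.drop (v+1))) := by
      refine ((flatten_rowInsert_perm T0 y).append_right _).trans ?_
      refine List.Perm.trans ?_ (List.perm_middle).symm
      simpa using (hT0flat.append_right _).cons y
    refine hperm.nodup_iff.2 ?_
    rw [← hsplit]; exact hA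
  refine ⟨T0, k, c, hT0, hT0nd, hyT0, hEnt, hnd2, std_rowInsert hT0 hyT0 hT0nd, ?_⟩
  conv_lhs => rw [RS, hsplit]
  rw [List.foldl_append, List.foldl_cons]

end RSAux

/-- `τ(P(w)) = τ(w)`: for `1 ≤ i ≤ n−1`, the entry `i+1` lies in a
strictly lower row of `P(w)` than `i` iff the position of `i` in the word of `w`
is after the position of `i+1` (i.e. `w⁻¹(i) > w⁻¹(i+1)`). -/
theorem stmt11 (n : ℕ) (w : Equiv.Perm (Fin n)) (i : ℕ) (h1 : 1 ≤ i) (h2 : i + 1 ≤ n) :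
    rowOf (RS (wordOf w)) i < rowOf (RS (wordOf w)) (i + 1) ↔
      (wordOf w).idxOf (i + 1) < (wordOf w).idxOf i := by
  classical
  set A := wordOf w with hA
  have hAnd : A.Nodup := RSAux.nodup_wordOf w
  have hiA : i ∈ A := RSAux.mem_wordOf w h1 (by omega)
  have hi1A : (i+1) ∈ A := RSAux.mem_wordOf w (by omega) h2
  have hRSnd : (RS A).flatten.Nodup := by
    obtain ⟨_, hperm⟩ := RSAux.fold_std A [] ⟨by simp, List.isChain_nil⟩ (by simpa using hAnd)
    exact (by simpa [RS] using hperm : (RS A).flatten.Perm A).nodup_iff.2 hAnd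
  have hne : List.idxOf i A ≠ List.idxOf (i+1) A := by
    intro hc
    have hp : List.idxOf i A < A.length := List.idxOf_lt_length_iff.2 hiA
    have hq : List.idxOf (i+1) A < A.length := List.idxOf_lt_length_iff.2 hi1A
    have e1 : A[List.idxOf i A]? = some i := by
      rw [List.getElem?_eq_getElem hp, List.getElem_idxOf hp]
    have e2 : A[List.idxOf (i+1) A]? = some (i+1) := by
      rw [List.getElem?_eq_getElem hq, List.getElem_idxOf hq]
    rw [hc, e2] at e1
    simp at e1
  rcases lt_or_gt_of_ne hne with hlt | hgt
  · -- i before i+1 : no descent on either side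
    obtain ⟨T0, k, c, hT0, hT0nd, hyT0, hEnt, hnd2, hstd2, hRSeq⟩ :=
      RSAux.main_case hAnd hiA hi1A hlt
    have hinv : RSAux.Inv1 i (RS A) := by
      rw [hRSeq]
      exact RSAux.fold_inv1 _ _ hstd2 hnd2 (RSAux.act1 hT0 hT0nd hyT0 hEnt)
    obtain ⟨k1, c1, k2, c2, hkk, hcc, e1, e2⟩ := hinv
    rw [RSAux.rowOf_ent hRSnd e1, RSAux.rowOf_ent hRSnd e2]
    constructor
    · omega
    · intro hc; exact absurd hc (by omega)
  · -- i+1 before i : descent on both sides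
    obtain ⟨T0, k, c, hT0, hT0nd, hyT0, hEnt, hnd2, hstd2, hRSeq⟩ :=
      RSAux.main_case hAnd hi1A hiA hgt
    have hinv : RSAux.Inv2 i (RS A) := by
      rw [hRSeq]
      exact RSAux.fold_inv2 _ _ hstd2 hnd2 (RSAux.act2 hT0 hT0nd hyT0 hEnt)
    obtain ⟨k1, c1, k2, c2, hkk, e1, e2⟩ := hinv
    rw [RSAux.rowOf_ent hRSnd e1, RSAux.rowOf_ent hRSnd e2]
    constructor
    · intro _; omega
    · intro _; omega
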